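/- Let A = Σ{A_{ij} | i,j ∈ I} be the generalized matrix ring of a Γ_I-system. Then \bar r_b(A) = g.m.r_b(A) = r_b(A): the componentwise intersection of all prime g.m.ideals of A equals the largest g.m.ideal N of A all of whose elements are m-nilpotent in the ring N, and both equal the Baer radical of the ring A. -/

import Mathlib

/-!
Generalized matrix rings (g.m.rings) of a `Γ_I`-system, their g.m.ideals,
g.m.homomorphisms, quotients, and the general theory of radicals,
following Zhang, "The Baer radical of generalized matrix rings".
-/

universe u v w

set_option autoImplicit false
set_option maxHeartbeats 1000000

/-- A `Γ_I`-system: a family of additive abelian groups `A i j` (`i j : I`)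
with multiplications `A i j × A j k → A i k`, additive in each variable and
associative. -/
structure GammaSystem (I : Type u) where
  A : I → I → Type v
  [inst : ∀ i j, AddCommGroup (A i j)]
  mul : ∀ {i j k : I}, A i j → A j k → A i k
  add_mul : ∀ {i j k : I} (x y : A i j) (z : A j k), mul (x + y) z = mul x z + mul y z
  mul_add : ∀ {i j k : I} (w : A i j) (x y : A j k), mul w (x + y) = mul w x + mul w y
  mul_assoc : ∀ {l i j k : I} (w : A l i) (x : A i j) (z : A j k),
    mul w (mul x z) = mul (mul w x) z

attribute [instance] GammaSystem.inst

variable {I : Type u}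

/-- The generalized matrix ring `A = Σ{A_{ij} | i,j ∈ I}` of a `Γ_I`-system:
the external direct sum `⨁_{(i,j)} A i j` (finitely supported families). -/
abbrev GMRing (S : GammaSystem I) : Type (max u v) := Π₀ p : I × I, S.A p.1 p.2

namespace GammaSystem

variable (S : GammaSystem I)

lemma zero_mul' {i j k : I} (z : S.A j k) : S.mul (0 : S.A i j) z = 0 := by
  have h := S.add_mul (0 : S.A i j) 0 z
  rw [add_zero] at h
  exact (add_eq_left.mp h.symm)

lemma mul_zero' {i j k : I} (w : S.A i j) : S.mul w (0 : S.A j k) = 0 := by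
  have h := S.mul_add w (0 : S.A j k) 0
  rw [add_zero] at h
  exact (add_eq_left.mp h.symm)

lemma neg_mul' {i j k : I} (x : S.A i j) (z : S.A j k) :
    S.mul (-x) z = -(S.mul x z) := by
  have h := S.add_mul x (-x) z
  rw [add_neg_cancel, S.zero_mul'] at h
  exact (neg_eq_of_add_eq_zero_right h.symm).symm

lemma mul_neg' {i j k : I} (w : S.A i j) (x : S.A j k) :
    S.mul w (-x) = -(S.mul w x) := by
  have h := S.mul_add w x (-x)
  rw [add_neg_cancel, S.mul_zero'] at h
  exact (neg_eq_of_add_eq_zero_right h.symm).symm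

-- Multiplication of generalized matrices: `(x*y)_{ij} = ∑_k x_{ik} y_{kj}`.
open Classical in
noncomputable def gmul (x y : GMRing S) : GMRing S :=
  x.sum fun p a => y.sum fun q b =>
    if h : p.2 = q.1 then
      DFinsupp.single (p.1, q.2)
        (S.mul a (cast (congrArg (fun t => S.A t q.2) h.symm) b))
    else 0

open Classical in
lemma gmul_inner_zero (p : I × I) (a : S.A p.1 p.2) (q : I × I) :
    (if h : p.2 = q.1 then
      DFinsupp.single (p.1, q.2)
        (S.mul a (cast (congrArg (fun t => S.A t q.2) h.symm) (0 : S.A q.1 q.2)))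
    else (0 : GMRing S)) = (0 : GMRing S) := by
  obtain ⟨p1, p2⟩ := p
  obtain ⟨q1, q2⟩ := q
  by_cases h : p2 = q1
  · subst h
    simp [S.mul_zero']
  · simp [h]

open Classical in
lemma gmul_inner_add (p : I × I) (a : S.A p.1 p.2) (q : I × I) (b₁ b₂ : S.A q.1 q.2) :
    (if h : p.2 = q.1 then
      DFinsupp.single (p.1, q.2)
        (S.mul a (cast (congrArg (fun t => S.A t q.2) h.symm) (b₁ + b₂)))
    else (0 : GMRing S)) =
    (if h : p.2 = q.1 then
      DFinsupp.single (p.1, q.2)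
        (S.mul a (cast (congrArg (fun t => S.A t q.2) h.symm) b₁))
    else (0 : GMRing S)) +
    (if h : p.2 = q.1 then
      DFinsupp.single (p.1, q.2)
        (S.mul a (cast (congrArg (fun t => S.A t q.2) h.symm) b₂))
    else (0 : GMRing S)) := by
  obtain ⟨p1, p2⟩ := p
  obtain ⟨q1, q2⟩ := q
  by_cases h : p2 = q1
  · subst h
    simp [S.mul_add, DFinsupp.single_add]
  · simp [h]

open Classical in
lemma gmul_add (x y z : GMRing S) : S.gmul x (y + z) = S.gmul x y + S.gmul x z := by
  unfold gmul
  have : ∀ (p : I × I) (a : S.A p.1 p.2),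
      (y + z).sum (fun q b =>
        if h : p.2 = q.1 then
          DFinsupp.single (p.1, q.2)
            (S.mul a (cast (congrArg (fun t => S.A t q.2) h.symm) b))
        else (0 : GMRing S)) =
      y.sum (fun q b =>
        if h : p.2 = q.1 then
          DFinsupp.single (p.1, q.2)
            (S.mul a (cast (congrArg (fun t => S.A t q.2) h.symm) b))
        else (0 : GMRing S)) +
      z.sum (fun q b =>
        if h : p.2 = q.1 then
          DFinsupp.single (p.1, q.2)
            (S.mul a (cast (congrArg (fun t => S.A t q.2) h.symm) b))
        else (0 : GMRing S)) := by
    intro p a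
    exact DFinsupp.sum_add_index (fun q => S.gmul_inner_zero p a q)
      (fun q b₁ b₂ => S.gmul_inner_add p a q b₁ b₂)
  calc x.sum (fun p a => (y + z).sum fun q b =>
        if h : p.2 = q.1 then
          DFinsupp.single (p.1, q.2)
            (S.mul a (cast (congrArg (fun t => S.A t q.2) h.symm) b))
        else (0 : GMRing S))
      = x.sum (fun p a =>
          (y.sum fun q b =>
            if h : p.2 = q.1 then
              DFinsupp.single (p.1, q.2)
                (S.mul a (cast (congrArg (fun t => S.A t q.2) h.symm) b))
            else (0 : GMRing S)) +
          (z.sum fun q b =>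
            if h : p.2 = q.1 then
              DFinsupp.single (p.1, q.2)
                (S.mul a (cast (congrArg (fun t => S.A t q.2) h.symm) b))
            else (0 : GMRing S))) := by
        exact congrArg (DFinsupp.sum x) (funext fun p => funext fun a => this p a)
    _ = _ := DFinsupp.sum_add

open Classical in
lemma add_gmul (x y z : GMRing S) : S.gmul (x + y) z = S.gmul x z + S.gmul y z := by
  unfold gmul
  refine DFinsupp.sum_add_index (fun p => ?_) (fun p a₁ a₂ => ?_)
  · have : (fun (q : I × I) (b : S.A q.1 q.2) =>
        (if h : p.2 = q.1 then
          DFinsupp.single (p.1, q.2)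
            (S.mul (0 : S.A p.1 p.2) (cast (congrArg (fun t => S.A t q.2) h.symm) b))
        else (0 : GMRing S))) = fun q b => (0 : GMRing S) := by
      funext q b
      obtain ⟨p1, p2⟩ := p
      obtain ⟨q1, q2⟩ := q
      by_cases h : p2 = q1
      · subst h; simp [S.zero_mul']
      · simp [h]
    rw [congrArg (DFinsupp.sum z) this, DFinsupp.sum_zero]
  · have : (fun (q : I × I) (b : S.A q.1 q.2) =>
        (if h : p.2 = q.1 then
          DFinsupp.single (p.1, q.2)
            (S.mul (a₁ + a₂) (cast (congrArg (fun t => S.A t q.2) h.symm) b))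
        else (0 : GMRing S))) = fun q b =>
        (if h : p.2 = q.1 then
          DFinsupp.single (p.1, q.2)
            (S.mul a₁ (cast (congrArg (fun t => S.A t q.2) h.symm) b))
        else (0 : GMRing S)) +
        (if h : p.2 = q.1 then
          DFinsupp.single (p.1, q.2)
            (S.mul a₂ (cast (congrArg (fun t => S.A t q.2) h.symm) b))
        else (0 : GMRing S)) := by
      funext q b
      obtain ⟨p1, p2⟩ := p
      obtain ⟨q1, q2⟩ := q
      by_cases h : p2 = q1
      · subst h; simp [S.add_mul, DFinsupp.single_add]
      · simp [h]
    rw [congrArg (DFinsupp.sum z) this, DFinsupp.sum_add]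

open Classical in
lemma zero_gmul (y : GMRing S) : S.gmul 0 y = 0 := by
  unfold gmul
  exact DFinsupp.sum_zero_index

open Classical in
lemma gmul_zero (x : GMRing S) : S.gmul x 0 = 0 := by
  unfold gmul
  have : (fun (p : I × I) (a : S.A p.1 p.2) =>
      DFinsupp.sum (0 : GMRing S) (fun q b =>
        if h : p.2 = q.1 then
          DFinsupp.single (p.1, q.2)
            (S.mul a (cast (congrArg (fun t => S.A t q.2) h.symm) b))
        else (0 : GMRing S))) = fun p a => (0 : GMRing S) := by
    funext p a
    exact DFinsupp.sum_zero_index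
  rw [congrArg (DFinsupp.sum x) this, DFinsupp.sum_zero]

open Classical in
lemma gmul_single (p : I × I) (a : S.A p.1 p.2) (y : GMRing S) :
    S.gmul (DFinsupp.single p a) y =
      y.sum fun q b =>
        if h : p.2 = q.1 then
          DFinsupp.single (p.1, q.2)
            (S.mul a (cast (congrArg (fun t => S.A t q.2) h.symm) b))
        else 0 := by
  unfold gmul
  refine DFinsupp.sum_single_index ?_
  have : (fun (q : I × I) (b : S.A q.1 q.2) =>
      (if h : p.2 = q.1 then
        DFinsupp.single (p.1, q.2)
          (S.mul (0 : S.A p.1 p.2) (cast (congrArg (fun t => S.A t q.2) h.symm) b))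
      else (0 : GMRing S))) = fun q b => (0 : GMRing S) := by
    funext q b
    obtain ⟨p1, p2⟩ := p; obtain ⟨q1, q2⟩ := q
    by_cases h : p2 = q1
    · subst h; simp [S.zero_mul']
    · simp [h]
  rw [congrArg (DFinsupp.sum y) this, DFinsupp.sum_zero]

open Classical in
lemma gmul_single_single (p q : I × I) (a : S.A p.1 p.2) (b : S.A q.1 q.2) :
    S.gmul (DFinsupp.single p a) (DFinsupp.single q b) =
      if h : p.2 = q.1 then
        DFinsupp.single (p.1, q.2)
          (S.mul a (cast (congrArg (fun t => S.A t q.2) h.symm) b))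
      else 0 := by
  rw [S.gmul_single]
  exact DFinsupp.sum_single_index (S.gmul_inner_zero p a q)

open Classical in
lemma gmul_single_assoc (p q r : I × I) (a : S.A p.1 p.2) (b : S.A q.1 q.2)
    (c : S.A r.1 r.2) :
    S.gmul (S.gmul (DFinsupp.single p a) (DFinsupp.single q b)) (DFinsupp.single r c) =
    S.gmul (DFinsupp.single p a) (S.gmul (DFinsupp.single q b) (DFinsupp.single r c)) := by
  obtain ⟨p1, p2⟩ := p; obtain ⟨q1, q2⟩ := q; obtain ⟨r1, r2⟩ := r
  by_cases h1 : p2 = q1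
  · subst h1
    by_cases h2 : q2 = r1
    · subst h2
      rw [S.gmul_single_single (p1, p2) (p2, q2) a b, dif_pos rfl,
        S.gmul_single_single (p2, q2) (q2, r2) b c, dif_pos rfl,
        S.gmul_single_single (p1, q2) (q2, r2) _ c, dif_pos rfl,
        S.gmul_single_single (p1, p2) (p2, r2) a _, dif_pos rfl]
      show DFinsupp.single (p1, r2) _ = DFinsupp.single (p1, r2) _
      rw [show (cast (congrArg (fun t => S.A t q2) (Eq.symm rfl)) b) = b from rfl,
        show (cast (congrArg (fun t => S.A t r2) (Eq.symm rfl)) c) = c from rfl]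
      exact congrArg _ (S.mul_assoc a b c).symm
    · rw [S.gmul_single_single (p1, p2) (p2, q2) a b, dif_pos rfl,
        S.gmul_single_single (p2, q2) (r1, r2) b c, dif_neg h2,
        S.gmul_single_single (p1, q2) (r1, r2) _ c, dif_neg h2, S.gmul_zero]
  · by_cases h2 : q2 = r1
    · subst h2
      rw [S.gmul_single_single (p1, p2) (q1, q2) a b, dif_neg h1,
        S.gmul_single_single (q1, q2) (q2, r2) b c, dif_pos rfl,
        S.gmul_single_single (p1, p2) (q1, r2) a _, dif_neg h1, S.zero_gmul]
    · rw [S.gmul_single_single (p1, p2) (q1, q2) a b, dif_neg h1,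
        S.gmul_single_single (q1, q2) (r1, r2) b c, dif_neg h2,
        S.zero_gmul, S.gmul_zero]

open Classical in
lemma gmul_single_single_assoc' (p q : I × I) (a : S.A p.1 p.2) (b : S.A q.1 q.2)
    (z : GMRing S) :
    S.gmul (S.gmul (DFinsupp.single p a) (DFinsupp.single q b)) z =
    S.gmul (DFinsupp.single p a) (S.gmul (DFinsupp.single q b) z) := by
  induction z using DFinsupp.induction with
  | h0 => simp only [S.gmul_zero, S.zero_gmul]
  | ha r c f hf hc ih =>
      rw [S.gmul_add, S.gmul_add, S.gmul_add, ih, S.gmul_single_assoc]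

open Classical in
lemma gmul_single_assoc'' (p : I × I) (a : S.A p.1 p.2) (y z : GMRing S) :
    S.gmul (S.gmul (DFinsupp.single p a) y) z =
    S.gmul (DFinsupp.single p a) (S.gmul y z) := by
  induction y using DFinsupp.induction with
  | h0 => simp only [S.gmul_zero, S.zero_gmul]
  | ha q b f hf hb ih =>
      rw [S.gmul_add, S.add_gmul, S.add_gmul, S.gmul_add, ih,
        S.gmul_single_single_assoc']

open Classical in
lemma gmul_assoc (x y z : GMRing S) :
    S.gmul (S.gmul x y) z = S.gmul x (S.gmul y z) := by
  induction x using DFinsupp.induction with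
  | h0 => simp only [S.gmul_zero, S.zero_gmul]
  | ha p a f hf ha ih =>
      rw [S.add_gmul, S.add_gmul, S.add_gmul, ih, S.gmul_single_assoc'']

noncomputable instance : NonUnitalNonAssocRing (GMRing S) :=
  { (inferInstance : AddCommGroup (GMRing S)) with
    mul := S.gmul
    left_distrib := S.gmul_add
    right_distrib := fun x y z => S.add_gmul x y z
    zero_mul := S.zero_gmul
    mul_zero := S.gmul_zero }

/-- The generalized matrix ring is a (possibly non-unital) associative ring. -/
noncomputable instance : NonUnitalRing (GMRing S) :=
  { (inferInstance : NonUnitalNonAssocRing (GMRing S)) with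
    mul_assoc := S.gmul_assoc }

open Classical in
lemma single_gmul_single_apply_eq (t : I × I) (b : S.A t.1 t.2) (q r : I)
    (z : S.A q r) (p : I) :
    (S.gmul (DFinsupp.single t b) (DFinsupp.single (q, r) z)) (p, r) =
      S.mul ((DFinsupp.single t b : GMRing S) (p, q)) z := by
  obtain ⟨t1, t2⟩ := t
  rw [S.gmul_single_single]
  by_cases h2 : t2 = q
  · subst h2
    rw [dif_pos rfl]
    rw [show (cast (congrArg (fun t => S.A t r) (Eq.symm rfl)) z) = z from rfl]
    by_cases h1 : t1 = p
    · subst h1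
      rw [DFinsupp.single_eq_same, DFinsupp.single_eq_same]
    · rw [DFinsupp.single_eq_of_ne (fun h => h1 (congrArg Prod.fst h).symm),
        DFinsupp.single_eq_of_ne (fun h => h1 (congrArg Prod.fst h).symm), S.zero_mul']
  · rw [dif_neg h2, DFinsupp.zero_apply,
      DFinsupp.single_eq_of_ne (fun h => h2 (congrArg Prod.snd h).symm), S.zero_mul']

open Classical in
lemma single_gmul_single_apply_ne (t : I × I) (b : S.A t.1 t.2) (q r : I)
    (z : S.A q r) (p s : I) (hs : s ≠ r) :
    (S.gmul (DFinsupp.single t b) (DFinsupp.single (q, r) z)) (p, s) = 0 := by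
  obtain ⟨t1, t2⟩ := t
  rw [S.gmul_single_single]
  by_cases h2 : t2 = q
  · subst h2
    rw [dif_pos rfl,
      DFinsupp.single_eq_of_ne (fun h => hs (congrArg Prod.snd h))]
  · rw [dif_neg h2, DFinsupp.zero_apply]

open Classical in
lemma gmul_single_right_apply (c : GMRing S) (q r : I) (z : S.A q r) (p : I) :
    (S.gmul c (DFinsupp.single (q, r) z)) (p, r) = S.mul (c (p, q)) z := by
  induction c using DFinsupp.induction with
  | h0 =>
      rw [S.zero_gmul, DFinsupp.zero_apply, DFinsupp.zero_apply, S.zero_mul']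
  | ha t b f hf hb ih =>
      rw [S.add_gmul, DFinsupp.add_apply, DFinsupp.add_apply, ih,
        S.single_gmul_single_apply_eq, S.add_mul]

open Classical in
lemma gmul_single_right_apply_ne (c : GMRing S) (q r : I) (z : S.A q r) (p s : I)
    (hs : s ≠ r) :
    (S.gmul c (DFinsupp.single (q, r) z)) (p, s) = 0 := by
  induction c using DFinsupp.induction with
  | h0 => rw [S.zero_gmul, DFinsupp.zero_apply]
  | ha t b f hf hb ih =>
      rw [S.add_gmul, DFinsupp.add_apply, ih,
        S.single_gmul_single_apply_ne _ _ _ _ _ _ _ hs, add_zero]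

open Classical in
lemma single_gmul_single_apply_eq' (q r : I) (z : S.A q r) (t : I × I)
    (b : S.A t.1 t.2) (s : I) :
    (S.gmul (DFinsupp.single (q, r) z) (DFinsupp.single t b)) (q, s) =
      S.mul z ((DFinsupp.single t b : GMRing S) (r, s)) := by
  obtain ⟨t1, t2⟩ := t
  rw [S.gmul_single_single]
  by_cases h1 : r = t1
  · subst h1
    rw [dif_pos rfl]
    rw [show (cast (congrArg (fun t => S.A t t2) (Eq.symm rfl)) b) = b from rfl]
    by_cases h2 : t2 = s
    · subst h2
      rw [DFinsupp.single_eq_same, DFinsupp.single_eq_same]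
    · rw [DFinsupp.single_eq_of_ne (fun h => h2 (congrArg Prod.snd h).symm),
        DFinsupp.single_eq_of_ne (fun h => h2 (congrArg Prod.snd h).symm), S.mul_zero']
  · rw [dif_neg h1, DFinsupp.zero_apply,
      DFinsupp.single_eq_of_ne (fun h => h1 (congrArg Prod.fst h)), S.mul_zero']

open Classical in
lemma single_gmul_single_apply_ne' (q r : I) (z : S.A q r) (t : I × I)
    (b : S.A t.1 t.2) (p s : I) (hp : p ≠ q) :
    (S.gmul (DFinsupp.single (q, r) z) (DFinsupp.single t b)) (p, s) = 0 := by
  obtain ⟨t1, t2⟩ := t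
  rw [S.gmul_single_single]
  by_cases h1 : r = t1
  · subst h1
    rw [dif_pos rfl,
      DFinsupp.single_eq_of_ne (fun h => hp (congrArg Prod.fst h))]
  · rw [dif_neg h1, DFinsupp.zero_apply]

open Classical in
lemma single_gmul_left_apply (q r : I) (z : S.A q r) (c : GMRing S) (s : I) :
    (S.gmul (DFinsupp.single (q, r) z) c) (q, s) = S.mul z (c (r, s)) := by
  induction c using DFinsupp.induction with
  | h0 => rw [S.gmul_zero, DFinsupp.zero_apply, DFinsupp.zero_apply, S.mul_zero']
  | ha t b f hf hb ih =>
      rw [S.gmul_add, DFinsupp.add_apply, DFinsupp.add_apply, ih,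
        S.single_gmul_single_apply_eq', S.mul_add]

open Classical in
lemma single_gmul_left_apply_ne (q r : I) (z : S.A q r) (c : GMRing S) (p s : I)
    (hp : p ≠ q) :
    (S.gmul (DFinsupp.single (q, r) z) c) (p, s) = 0 := by
  induction c using DFinsupp.induction with
  | h0 => rw [S.gmul_zero, DFinsupp.zero_apply]
  | ha t b f hf hb ih =>
      rw [S.gmul_add, DFinsupp.add_apply, ih,
        S.single_gmul_single_apply_ne' _ _ _ _ _ _ _ hp, add_zero]

open Classical in
/-- The sandwich formula: `(c·e_{qr}(z)·d)_{ps} = c_{pq} z d_{rs}`. -/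
lemma gmul_single_gmul_apply (c d : GMRing S) (q r : I) (z : S.A q r) (p s : I) :
    (S.gmul (S.gmul c (DFinsupp.single (q, r) z)) d) (p, s) =
      S.mul (S.mul (c (p, q)) z) (d (r, s)) := by
  induction d using DFinsupp.induction with
  | h0 => rw [S.gmul_zero, DFinsupp.zero_apply, DFinsupp.zero_apply, S.mul_zero']
  | ha t b f hf hb ih =>
      obtain ⟨t1, t2⟩ := t
      rw [S.gmul_add, DFinsupp.add_apply, DFinsupp.add_apply, ih, S.mul_add]
      congr 1
      by_cases hs : s = t2
      · subst hs
        rw [S.gmul_single_right_apply]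
        by_cases h1 : t1 = r
        · subst h1
          rw [S.gmul_single_right_apply, DFinsupp.single_eq_same]
        · rw [S.gmul_single_right_apply_ne _ _ _ _ _ _ h1, S.zero_mul',
            DFinsupp.single_eq_of_ne (fun h => h1 (congrArg Prod.fst h).symm), S.mul_zero']
      · rw [S.gmul_single_right_apply_ne _ _ _ _ _ _ hs,
          DFinsupp.single_eq_of_ne (fun h => hs (congrArg Prod.snd h)), S.mul_zero']

open Classical in
/-- `e_{ij}(α) · u · e_{ij}(β) = e_{ij}(α u_{ji} β)`. -/
lemma single_gmul_gmul_single (i j : I) (α β : S.A i j) (u : GMRing S) :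
    S.gmul (S.gmul (DFinsupp.single (i, j) α) u) (DFinsupp.single (i, j) β) =
      DFinsupp.single (i, j) (S.mul (S.mul α (u (j, i))) β) := by
  induction u using DFinsupp.induction with
  | h0 =>
      rw [S.gmul_zero, S.zero_gmul, DFinsupp.zero_apply, S.mul_zero', S.zero_mul',
        DFinsupp.single_zero]
  | ha t w f hf hw ih =>
      obtain ⟨t1, t2⟩ := t
      rw [S.gmul_add, S.add_gmul, ih, DFinsupp.add_apply, S.mul_add, S.add_mul,
        DFinsupp.single_add]
      congr 1
      by_cases h1 : j = t1
      · subst h1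
        rw [S.gmul_single_single, dif_pos rfl]
        rw [show (cast (congrArg (fun t => S.A t t2) (Eq.symm rfl)) w) = w from rfl]
        by_cases h2 : t2 = i
        · subst h2
          rw [S.gmul_single_single, dif_pos rfl, DFinsupp.single_eq_same]
          rfl
        · rw [S.gmul_single_single, dif_neg h2,
            DFinsupp.single_eq_of_ne (fun h => h2 (congrArg Prod.snd h).symm),
            S.mul_zero', S.zero_mul', DFinsupp.single_zero]
      · rw [S.gmul_single_single, dif_neg (fun h => h1 h), S.zero_gmul,
          DFinsupp.single_eq_of_ne (fun h => h1 (congrArg Prod.fst h)),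
          S.mul_zero', S.zero_mul', DFinsupp.single_zero]

/-- A `Γ_I`-system (g.m.ring) is zero if all its components are zero. -/
def IsZero : Prop := ∀ (i j : I) (x : S.A i j), x = 0

/-- `x ∈ A_{ij}` is `m`-nilpotent in the `A_{ji}`-ring `A_{ij}`: every
`m`-sequence `a_{n+1} = a_n u_n a_n` (`u_n ∈ A_{ji}`) with `a_1 = x`
satisfies `a_k = 0` for some `k`. -/
def MNilpotent (i j : I) (x : S.A i j) : Prop :=
  ∀ a : ℕ → S.A i j, a 0 = x →
    (∀ n, ∃ u : S.A j i, a (n + 1) = S.mul (S.mul (a n) u) (a n)) →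
    ∃ k, a k = 0

/-- The Baer radical `r_b(A_{ij})` of the `A_{ji}`-ring `A_{ij}`: the set of
its `m`-nilpotent elements. -/
def componentBaer (i j : I) : Set (S.A i j) := { x | S.MNilpotent i j x }

end GammaSystem

section RingNotions

variable (R : Type w) [NonUnitalRing R]

/-- A two-sided ideal `P` of a (possibly non-unital) ring is prime if
`BC ⊆ P` implies `B ⊆ P` or `C ⊆ P`. -/
def TwoSidedIdeal.IsPrimeIdeal {R : Type w} [NonUnitalRing R]
    (P : TwoSidedIdeal R) : Prop :=
  ∀ B C : TwoSidedIdeal R, (∀ b ∈ B, ∀ c ∈ C, b * c ∈ P) → B ≤ P ∨ C ≤ P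

/-- The Baer radical of a (possibly non-unital) ring: the intersection of all
prime two-sided ideals. -/
def baerRadical : Set R := { x | ∀ P : TwoSidedIdeal R, P.IsPrimeIdeal → x ∈ P }

/-- `x` is an `m`-nilpotent element of the ring `R`: every `m`-sequence
`a_{n+1} = a_n u_n a_n` (`u_n ∈ R`) with `a_1 = x` reaches `0`. -/
def IsMNilpotent {R : Type w} [NonUnitalRing R] (x : R) : Prop :=
  ∀ a : ℕ → R, a 0 = x → (∀ n, ∃ u : R, a (n + 1) = a n * u * a n) → ∃ k, a k = 0

/-- `x` is `m`-nilpotent in the subring given by the subset `T` of `R`: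
every `m`-sequence lying in `T`, with multipliers `u_n ∈ T`, starting at `x`,
reaches `0`. -/
def IsMNilpotentIn {R : Type w} [NonUnitalRing R] (T : Set R) (x : R) : Prop :=
  ∀ a : ℕ → R, (∀ n, a n ∈ T) → a 0 = x →
    (∀ n, ∃ u ∈ T, a (n + 1) = a n * u * a n) → ∃ k, a k = 0

/-- A ring is prime if `BC = 0` implies `B = 0` or `C = 0` for all two-sided
ideals `B, C`. -/
def IsPrimeRing : Prop :=
  ∀ B C : TwoSidedIdeal R, (∀ b ∈ B, ∀ c ∈ C, b * c = 0) → B = ⊥ ∨ C = ⊥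

/-- A ring is semiprime if `B·B = 0` implies `B = 0` for every two-sided
ideal `B`. -/
def IsSemiprimeRing : Prop :=
  ∀ B : TwoSidedIdeal R, (∀ x ∈ B, ∀ y ∈ B, x * y = 0) → B = ⊥

/-- The annihilator `B* = {x ∈ R | xB = Bx = 0}` of a two-sided ideal. -/
def TwoSidedIdeal.annihilator {R : Type w} [NonUnitalRing R]
    (B : TwoSidedIdeal R) : TwoSidedIdeal R :=
  TwoSidedIdeal.mk' { x | ∀ b ∈ B, x * b = 0 ∧ b * x = 0 }
    (fun b hb => ⟨zero_mul b, mul_zero b⟩)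
    (fun {x y} hx hy b hb =>
      ⟨by rw [add_mul, (hx b hb).1, (hy b hb).1, add_zero],
       by rw [mul_add, (hx b hb).2, (hy b hb).2, add_zero]⟩)
    (fun {x} hx b hb =>
      ⟨by rw [neg_mul, (hx b hb).1, neg_zero],
       by rw [mul_neg, (hx b hb).2, neg_zero]⟩)
    (fun {x y} hy b hb => by
      refine ⟨?_, ?_⟩
      · rw [mul_assoc, (hy b hb).1, mul_zero]
      · rw [← mul_assoc]
        exact (hy (b * x) (B.mul_mem_right b x hb)).2)
    (fun {x y} hx b hb => by
      refine ⟨?_, ?_⟩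
      · rw [mul_assoc]
        exact (hx (y * b) (B.mul_mem_left y b hb)).1
      · rw [← mul_assoc, (hx b hb).2, zero_mul])

end RingNotions

section RingBaer

variable {R : Type w} [NonUnitalRing R]



/-- The two-sided ideal generated by a set `M` that is closed under left and
right multiplication by `R`. -/
def closedIdeal (M : Set R) (hl : ∀ r : R, ∀ m ∈ M, r * m ∈ M)
    (hr : ∀ m ∈ M, ∀ r : R, m * r ∈ M) : TwoSidedIdeal R :=
  TwoSidedIdeal.mk' (AddSubgroup.closure M)
    (AddSubgroup.zero_mem _)
    (fun hx hy => AddSubgroup.add_mem _ hx hy)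
    (fun hx => AddSubgroup.neg_mem _ hx)
    (fun {x y} hy => by
      induction hy using AddSubgroup.closure_induction with
      | mem m hm => exact AddSubgroup.subset_closure (hl x m hm)
      | zero => rw [mul_zero]; exact AddSubgroup.zero_mem _
      | add a b _ _ ha hb => rw [mul_add]; exact AddSubgroup.add_mem _ ha hb
      | neg a _ ha => rw [mul_neg]; exact AddSubgroup.neg_mem _ ha)
    (fun {x y} hx => by
      induction hx using AddSubgroup.closure_induction with
      | mem m hm => exact AddSubgroup.subset_closure (hr m hm y)
      | zero => rw [zero_mul]; exact AddSubgroup.zero_mem _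
      | add a b _ _ ha hb => rw [add_mul]; exact AddSubgroup.add_mem _ ha hb
      | neg a _ ha => rw [neg_mul]; exact AddSubgroup.neg_mem _ ha)

lemma prime_absorb (P : TwoSidedIdeal R) (hP : P.IsPrimeIdeal) (M : Set R)
    (hl : ∀ r : R, ∀ m ∈ M, r * m ∈ M)
    (hr : ∀ m ∈ M, ∀ r : R, m * r ∈ M)
    (hmul : ∀ m ∈ M, ∀ m' ∈ M, m * m' ∈ P) : M ⊆ P := by
  set B := closedIdeal M hl hr with hB
  have hmem : ∀ x, x ∈ B ↔ x ∈ AddSubgroup.closure M := fun x =>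
    TwoSidedIdeal.mem_mk' _ _ _ _ _ _ x
  have key : ∀ b ∈ B, ∀ c ∈ B, b * c ∈ P := by
    intro b hb c hc
    rw [hmem] at hb hc
    induction hb using AddSubgroup.closure_induction with
    | mem m hm =>
        induction hc using AddSubgroup.closure_induction with
        | mem m' hm' => exact hmul m hm m' hm'
        | zero => rw [mul_zero]; exact P.zero_mem
        | add a b _ _ ha hb => rw [mul_add]; exact P.add_mem ha hb
        | neg a _ ha => rw [mul_neg]; exact P.neg_mem ha
    | zero => rw [zero_mul]; exact P.zero_mem
    | add a b _ _ ha hb => rw [add_mul]; exact P.add_mem ha hb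
    | neg a _ ha => rw [neg_mul]; exact P.neg_mem ha
  rcases hP B B key with h | h <;>
    exact fun m hm => h ((hmem m).mpr (AddSubgroup.subset_closure hm))

lemma prime_step (P : TwoSidedIdeal R) (hP : P.IsPrimeIdeal) {x : R}
    (hx : x ∉ P) : ∃ u, x * u * x ∉ P := by
  by_contra h
  push_neg at h
  -- Step A : RxR ⊆ P
  have hA : ∀ r s : R, r * x * s ∈ P := by
    have : {y : R | ∃ r s : R, y = r * x * s} ⊆ P := by
      refine prime_absorb P hP _ ?_ ?_ ?_
      · rintro r' m ⟨r, s, rfl⟩; exact ⟨r' * r, s, by noncomm_ring⟩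
      · rintro m ⟨r, s, rfl⟩ s'; exact ⟨r, s * s', by noncomm_ring⟩
      · rintro m ⟨r, s, rfl⟩ m' ⟨r', s', rfl⟩
        have : r * x * s * (r' * x * s') = r * (x * (s * r') * x) * s' := by noncomm_ring
        rw [this]
        exact P.mul_mem_right _ _ (P.mul_mem_left _ _ (h _))
    intro r s; exact this ⟨r, s, rfl⟩
  -- Step B : xR ⊆ P
  have hB : ∀ s : R, x * s ∈ P := by
    have : ({y : R | ∃ s : R, y = x * s} ∪ P) ⊆ P := by
      refine prime_absorb P hP _ ?_ ?_ ?_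
      · rintro r m (⟨s, rfl⟩ | hm)
        · exact Or.inr (by rw [← mul_assoc]; exact hA r s)
        · exact Or.inr (P.mul_mem_left _ _ hm)
      · rintro m (⟨s, rfl⟩ | hm) r
        · exact Or.inl ⟨s * r, by rw [mul_assoc]⟩
        · exact Or.inr (P.mul_mem_right _ _ hm)
      · rintro m (⟨s, rfl⟩ | hm) m' (⟨s', rfl⟩ | hm')
        · have : x * s * (x * s') = x * s * x * s' := (mul_assoc _ _ _).symm
          rw [this]; exact P.mul_mem_right _ _ (h s)
        · exact P.mul_mem_left _ _ hm'
        · exact P.mul_mem_right _ _ hm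
        · exact P.mul_mem_left _ _ hm'
    intro s; exact this (Or.inl ⟨s, rfl⟩)
  -- Step B' : Rx ⊆ P
  have hB' : ∀ r : R, r * x ∈ P := by
    have : ({y : R | ∃ r : R, y = r * x} ∪ P) ⊆ P := by
      refine prime_absorb P hP _ ?_ ?_ ?_
      · rintro r' m (⟨r, rfl⟩ | hm)
        · exact Or.inl ⟨r' * r, by rw [mul_assoc]⟩
        · exact Or.inr (P.mul_mem_left _ _ hm)
      · rintro m (⟨r, rfl⟩ | hm) s
        · exact Or.inr (by rw [mul_assoc]; exact P.mul_mem_left _ _ (hB s))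
        · exact Or.inr (P.mul_mem_right _ _ hm)
      · rintro m (⟨r, rfl⟩ | hm) m' (⟨r', rfl⟩ | hm')
        · have : r * x * (r' * x) = r * (x * r' * x) := by noncomm_ring
          rw [this]; exact P.mul_mem_left _ _ (h r')
        · exact P.mul_mem_left _ _ hm'
        · exact P.mul_mem_right _ _ hm
        · exact P.mul_mem_left _ _ hm'
    intro r; exact this (Or.inl ⟨r, rfl⟩)
  -- Step C : x ∈ P
  have hC : ({x} ∪ P : Set R) ⊆ P := by
    refine prime_absorb P hP _ ?_ ?_ ?_
    · rintro r m (rfl | hm)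
      · exact Or.inr (hB' r)
      · exact Or.inr (P.mul_mem_left _ _ hm)
    · rintro m (rfl | hm) r
      · exact Or.inr (hB r)
      · exact Or.inr (P.mul_mem_right _ _ hm)
    · rintro m (rfl | hm) m' (rfl | hm')
      · exact hB m'
      · exact P.mul_mem_left _ _ hm'
      · exact P.mul_mem_right _ _ hm
      · exact P.mul_mem_left _ _ hm'
  exact hx (hC (Or.inl rfl))

/-- m-nilpotent elements lie in every prime two-sided ideal. -/
lemma IsMNilpotent.mem_prime {x : R} (hx : IsMNilpotent x)
    (P : TwoSidedIdeal R) (hP : P.IsPrimeIdeal) : x ∈ P := by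
  by_contra hxP
  -- build an m-sequence avoiding P
  have step : ∀ y : R, y ∉ P → ∃ u, y * u * y ∉ P := fun y hy => prime_step P hP hy
  let F : {y : R // y ∉ P} → {y : R // y ∉ P} := fun y =>
    ⟨y.1 * Classical.choose (step y.1 y.2) * y.1, Classical.choose_spec (step y.1 y.2)⟩
  let a : ℕ → {y : R // y ∉ P} := fun n => F^[n] ⟨x, hxP⟩
  have ha0 : (a 0).1 = x := rfl
  have hstep : ∀ n, ∃ u, (a (n+1)).1 = (a n).1 * u * (a n).1 := by
    intro n
    have : a (n+1) = F (a n) := Function.iterate_succ_apply' F n _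
    exact ⟨Classical.choose (step (a n).1 (a n).2), by rw [this]⟩
  obtain ⟨k, hk⟩ := hx (fun n => (a n).1) ha0 hstep
  exact (a k).2 (hk ▸ P.zero_mem)

/-- The sum of two two-sided ideals. -/
def sumIdeal (P B : TwoSidedIdeal R) : TwoSidedIdeal R :=
  TwoSidedIdeal.mk' {y | ∃ p ∈ P, ∃ b ∈ B, y = p + b}
    ⟨0, P.zero_mem, 0, B.zero_mem, (add_zero 0).symm⟩
    (fun {x y} ⟨p, hp, b, hb, hx⟩ ⟨q, hq, c, hc, hy⟩ =>
      ⟨p + q, P.add_mem hp hq, b + c, B.add_mem hb hc, by rw [hx, hy]; abel⟩)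
    (fun {x} ⟨p, hp, b, hb, hx⟩ =>
      ⟨-p, P.neg_mem hp, -b, B.neg_mem hb, by rw [hx]; abel⟩)
    (fun {x y} ⟨p, hp, b, hb, hy⟩ =>
      ⟨x * p, P.mul_mem_left _ _ hp, x * b, B.mul_mem_left _ _ hb, by
        rw [hy, mul_add]⟩)
    (fun {x y} ⟨p, hp, b, hb, hx⟩ =>
      ⟨p * y, P.mul_mem_right _ _ hp, b * y, B.mul_mem_right _ _ hb, by
        rw [hx, add_mul]⟩)

lemma mem_sumIdeal {P B : TwoSidedIdeal R} {y : R} :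
    y ∈ sumIdeal P B ↔ ∃ p ∈ P, ∃ b ∈ B, y = p + b :=
  TwoSidedIdeal.mem_mk' _ _ _ _ _ _ y

lemma le_sumIdeal_left {P B : TwoSidedIdeal R} : P ≤ sumIdeal P B :=
  fun x hx => mem_sumIdeal.mpr ⟨x, hx, 0, B.zero_mem, (add_zero x).symm⟩

lemma mem_sumIdeal_right {P B : TwoSidedIdeal R} {b : R} (hb : b ∈ B) :
    b ∈ sumIdeal P B :=
  mem_sumIdeal.mpr ⟨0, P.zero_mem, b, hb, (zero_add b).symm⟩

/-- The union of a nonempty chain of two-sided ideals. -/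
def chainIdeal (c : Set (TwoSidedIdeal R)) (hc : IsChain (· ≤ ·) c)
    (hne : c.Nonempty) : TwoSidedIdeal R :=
  TwoSidedIdeal.mk' (⋃ J ∈ c, (J : Set R))
    (by obtain ⟨J, hJ⟩ := hne
        exact Set.mem_biUnion hJ J.zero_mem)
    (fun {x y} hx hy => by
      simp only [Set.mem_iUnion] at hx hy ⊢
      obtain ⟨J, hJ, hxJ⟩ := hx
      obtain ⟨K, hK, hyK⟩ := hy
      rcases hc.total hJ hK with h | h
      · exact ⟨K, hK, K.add_mem (h hxJ) hyK⟩
      · exact ⟨J, hJ, J.add_mem hxJ (h hyK)⟩)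
    (fun {x} hx => by
      simp only [Set.mem_iUnion] at hx ⊢
      obtain ⟨J, hJ, hxJ⟩ := hx
      exact ⟨J, hJ, J.neg_mem hxJ⟩)
    (fun {x y} hy => by
      simp only [Set.mem_iUnion] at hy ⊢
      obtain ⟨J, hJ, hyJ⟩ := hy
      exact ⟨J, hJ, J.mul_mem_left _ _ hyJ⟩)
    (fun {x y} hx => by
      simp only [Set.mem_iUnion] at hx ⊢
      obtain ⟨J, hJ, hxJ⟩ := hx
      exact ⟨J, hJ, J.mul_mem_right _ _ hxJ⟩)

lemma mem_chainIdeal {c : Set (TwoSidedIdeal R)} {hc : IsChain (· ≤ ·) c}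
    {hne : c.Nonempty} {x : R} :
    x ∈ chainIdeal c hc hne ↔ ∃ J ∈ c, x ∈ J := by
  rw [chainIdeal, TwoSidedIdeal.mem_mk']
  simp

/-- Elements of every prime two-sided ideal are m-nilpotent. -/
lemma isMNilpotent_of_mem_primes {x : R}
    (hx : ∀ P : TwoSidedIdeal R, P.IsPrimeIdeal → x ∈ P) : IsMNilpotent x := by
  intro a ha0 hstep
  by_contra hnz
  push_neg at hnz
  choose u hu using hstep
  -- Zorn
  set 𝒮 : Set (TwoSidedIdeal R) := {J | ∀ n, a n ∉ J} with h𝒮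
  have hbot : (⊥ : TwoSidedIdeal R) ∈ 𝒮 := by
    intro n hn
    exact hnz n (by simpa using hn)
  obtain ⟨P, hP⟩ := zorn_le₀ 𝒮 (by
    intro c hc hchain
    rcases Set.eq_empty_or_nonempty c with rfl | hne
    · exact ⟨⊥, hbot, by simp⟩
    · refine ⟨chainIdeal c hchain hne, ?_, ?_⟩
      · intro n hn
        obtain ⟨J, hJ, hnJ⟩ := mem_chainIdeal.mp hn
        exact hc hJ n hnJ
      · intro J hJ y hy
        exact mem_chainIdeal.mpr ⟨J, hJ, hy⟩)
  -- a_n descends into any ideal containing it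
  have descend : ∀ (J : TwoSidedIdeal R) (n m : ℕ), n ≤ m → a n ∈ J → a m ∈ J := by
    intro J n m hnm h
    induction m with
    | zero => exact (Nat.le_zero.mp hnm) ▸ h
    | succ m ih =>
        rcases Nat.lt_or_ge n (m+1) with h' | h'
        · have := ih (Nat.lt_succ_iff.mp h')
          rw [hu m]
          exact J.mul_mem_right _ _ (J.mul_mem_right _ _ this)
        · exact (Nat.le_antisymm hnm h') ▸ h
  -- P is prime
  have hprime : P.IsPrimeIdeal := by
    intro B C hBC
    by_contra hcon
    push_neg at hcon
    obtain ⟨hB, hC⟩ := hcon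
    have hPB : sumIdeal P B ∉ 𝒮 := by
      intro hmem
      have hle := hP.2 hmem le_sumIdeal_left
      obtain ⟨b, hbB, hbP⟩ := Set.not_subset.mp (fun h => hB (fun y hy => h hy))
      exact hbP (hle (mem_sumIdeal_right hbB))
    have hPC : sumIdeal P C ∉ 𝒮 := by
      intro hmem
      have hle := hP.2 hmem le_sumIdeal_left
      obtain ⟨c, hcC, hcP⟩ := Set.not_subset.mp (fun h => hC (fun y hy => h hy))
      exact hcP (hle (mem_sumIdeal_right hcC))
    simp only [h𝒮, Set.mem_setOf_eq, not_forall, not_not] at hPB hPC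
    obtain ⟨n₁, hn₁⟩ := hPB
    obtain ⟨n₂, hn₂⟩ := hPC
    set N := max n₁ n₂ with hN
    have haB : a N ∈ sumIdeal P B := descend _ n₁ N (le_max_left _ _) hn₁
    have haC : a N ∈ sumIdeal P C := descend _ n₂ N (le_max_right _ _) hn₂
    obtain ⟨p, hp, b, hb, hab⟩ := mem_sumIdeal.mp haB
    obtain ⟨q, hq, cc, hcc, hac⟩ := mem_sumIdeal.mp haC
    have : a (N + 1) ∈ P := by
      rw [hu N]
      nth_rewrite 2 [hac]
      rw [hab]
      have expand : (p + b) * u N * (q + cc) =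
          p * (u N * q) + p * (u N * cc) + (b * u N) * q + b * (u N * cc) := by
        noncomm_ring
      rw [expand]
      refine P.add_mem (P.add_mem (P.add_mem ?_ ?_) ?_) ?_
      · exact P.mul_mem_right _ _ hp
      · exact P.mul_mem_right _ _ hp
      · exact P.mul_mem_left _ _ hq
      · exact hBC b hb _ (C.mul_mem_left _ _ hcc)
    exact hP.1 (N + 1) this
  exact hP.1 0 (ha0 ▸ hx P hprime)

end RingBaer

/-- A g.m.ideal of the g.m.ring of `S`: a family of additive subgroups
`B i j ≤ A i j` with `B_{ij} A_{jk} ⊆ B_{ik}` and `A_{ij} B_{jk} ⊆ B_{ik}`. -/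
structure GMIdeal (S : GammaSystem I) where
  B : ∀ i j : I, AddSubgroup (S.A i j)
  mul_mem_right : ∀ {i j k : I} (x : S.A i j) (z : S.A j k), x ∈ B i j → S.mul x z ∈ B i k
  mul_mem_left : ∀ {i j k : I} (x : S.A i j) (z : S.A j k), z ∈ B j k → S.mul x z ∈ B i k

namespace GMIdeal

variable {S : GammaSystem I} (N : GMIdeal S)

/-- The subset of the g.m.ring consisting of the generalized matrices all of
whose components lie in the g.m.ideal `N`. -/
def carrier : Set (GMRing S) := { x | ∀ p : I × I, x p ∈ N.B p.1 p.2 }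

/-- A g.m.ideal is zero if all its components are the zero subgroup. -/
def IsZero : Prop := ∀ i j : I, N.B i j = ⊥

/-- A g.m.ideal regarded as a g.m.ring (a `Γ_I`-system) in its own right. -/
def toSystem : GammaSystem I where
  A i j := N.B i j
  inst i j := inferInstance
  mul {i j k} x z := ⟨S.mul x.1 z.1, N.mul_mem_right x.1 z.1 x.2⟩
  add_mul x y z := Subtype.ext (S.add_mul x.1 y.1 z.1)
  mul_add w x y := Subtype.ext (S.mul_add w.1 x.1 y.1)
  mul_assoc w x z := Subtype.ext (S.mul_assoc w.1 x.1 z.1)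

/-- The quotient g.m.ring `A//B`, with components `A_{ij}/B_{ij}`. -/
def quotSystem : GammaSystem I where
  A i j := S.A i j ⧸ N.B i j
  inst i j := inferInstance
  mul {i j k} x z :=
    Quotient.liftOn₂' x z
      (fun a b => ((S.mul a b : S.A i k) : S.A i k ⧸ N.B i k))
      (by
        intro a₁ a₂ b₁ b₂ h₁ h₂
        replace h₁ := (QuotientAddGroup.leftRel_apply).mp h₁
        replace h₂ := (QuotientAddGroup.leftRel_apply).mp h₂
        refine (QuotientAddGroup.eq).mpr ?_
        have : -(S.mul a₁ a₂) + S.mul b₁ b₂ =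
            S.mul (-a₁ + b₁) a₂ + S.mul b₁ (-a₂ + b₂) := by
          rw [S.add_mul, S.mul_add, S.neg_mul', S.mul_neg']
          abel
        rw [this]
        exact add_mem (N.mul_mem_right _ _ h₁) (N.mul_mem_left _ _ h₂))
  add_mul {i j k} x y z := by
    refine Quotient.inductionOn₃' x y z ?_
    intro a b c
    show ((S.mul (a + b) c : S.A i k) : S.A i k ⧸ N.B i k) = _
    rw [S.add_mul]
    rfl
  mul_add {i j k} w x y := by
    refine Quotient.inductionOn₃' w x y ?_
    intro a b c
    show ((S.mul a (b + c) : S.A i k) : S.A i k ⧸ N.B i k) = _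
    rw [S.mul_add]
    rfl
  mul_assoc {l i j k} w x z := by
    refine Quotient.inductionOn₃' w x z ?_
    intro a b c
    show ((S.mul a (S.mul b c) : S.A l k) : S.A l k ⧸ N.B l k) = _
    rw [S.mul_assoc]
    rfl

/-- The annihilator g.m.ideal `B* = {x ∈ A | xB = Bx = 0}` of a g.m.ideal. -/
def ann : GMIdeal S where
  B i j :=
    { carrier := { x | (∀ (k : I) (b : S.A j k), b ∈ N.B j k → S.mul x b = 0) ∧
        (∀ (k : I) (b : S.A k i), b ∈ N.B k i → S.mul b x = 0) }
      add_mem' := by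
        rintro x y ⟨hx₁, hx₂⟩ ⟨hy₁, hy₂⟩
        refine ⟨fun k b hb => ?_, fun k b hb => ?_⟩
        · rw [S.add_mul, hx₁ k b hb, hy₁ k b hb, add_zero]
        · rw [S.mul_add, hx₂ k b hb, hy₂ k b hb, add_zero]
      zero_mem' := ⟨fun k b _ => S.zero_mul' b, fun k b _ => S.mul_zero' b⟩
      neg_mem' := by
        rintro x ⟨hx₁, hx₂⟩
        refine ⟨fun k b hb => ?_, fun k b hb => ?_⟩
        · rw [S.neg_mul', hx₁ k b hb, neg_zero]
        · rw [S.mul_neg', hx₂ k b hb, neg_zero] }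
  mul_mem_right := by
    rintro i j k x z ⟨hx₁, hx₂⟩
    refine ⟨fun m b hb => ?_, fun m b hb => ?_⟩
    · rw [← S.mul_assoc]
      exact hx₁ m (S.mul z b) (N.mul_mem_left z b hb)
    · rw [S.mul_assoc, hx₂ m b hb, S.zero_mul']
  mul_mem_left := by
    rintro i j k x z ⟨hz₁, hz₂⟩
    refine ⟨fun m b hb => ?_, fun m b hb => ?_⟩
    · rw [← S.mul_assoc, hz₁ m b hb, S.mul_zero']
    · rw [S.mul_assoc]
      exact hz₂ m (S.mul b x) (N.mul_mem_right b x hb)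

/-- `N` is a "Baer radical" g.m.ideal: every element of the ring `N` is
`m`-nilpotent in the ring `N`. -/
def IsBaerGMIdeal : Prop := ∀ x ∈ N.carrier, IsMNilpotentIn N.carrier x

end GMIdeal

/-- A g.m.homomorphism between two g.m.rings over the same index set. -/
structure GMHom (S T : GammaSystem I) where
  f : ∀ i j : I, S.A i j → T.A i j
  map_add : ∀ {i j : I} (x y : S.A i j), f i j (x + y) = f i j x + f i j y
  map_mul : ∀ {i j k : I} (x : S.A i j) (z : S.A j k),
    f i k (S.mul x z) = T.mul (f i j x) (f j k z)

/-- A g.m.homomorphism is surjective if each component map is onto. -/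
def GMHom.Surjective {S T : GammaSystem I} (ψ : GMHom S T) : Prop :=
  ∀ i j : I, Function.Surjective (ψ.f i j)

/-- The componentwise intersection `\bar r_b(A)` of all g.m.ideals `B` of `A`
such that the quotient ring `A//B` is a prime ring. -/
def gmBarBaer (S : GammaSystem I) : Set (GMRing S) :=
  { x | ∀ B : GMIdeal S, IsPrimeRing (GMRing B.quotSystem) →
      ∀ p : I × I, x p ∈ B.B p.1 p.2 }

section RadicalTheory

/-- `N` is the largest g.m.ideal of `S` belonging (as a g.m.ring) to the
class `r`. -/
def IsLargestRadicalIdeal (r : ∀ I₀ : Type u, GammaSystem.{u, v} I₀ → Prop)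
    {I : Type u} (S : GammaSystem I) (N : GMIdeal S) : Prop :=
  r I N.toSystem ∧ ∀ M : GMIdeal S, r I M.toSystem → ∀ i j : I, M.B i j ≤ N.B i j

/-- `r` is a radical property of g.m.rings: (R1) closure under surjective
g.m.homomorphic images; (R2) every g.m.ring has a largest `r`-g.m.ideal `r(A)`;
(R3) `A//r(A)` has no non-zero `r`-g.m.ideal. -/
def IsGMRadicalProperty (r : ∀ I₀ : Type u, GammaSystem.{u, v} I₀ → Prop) : Prop :=
  (∀ (I₀ : Type u) (S T : GammaSystem I₀) (ψ : GMHom S T),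
      ψ.Surjective → r I₀ S → r I₀ T) ∧
  (∀ (I₀ : Type u) (S : GammaSystem I₀), ∃ N : GMIdeal S,
      IsLargestRadicalIdeal r S N ∧
      ∀ P : GMIdeal N.quotSystem, r I₀ P.toSystem → P.IsZero)

/-- `S` is `r`-semisimple: `r(S) = 0`, i.e. every `r`-g.m.ideal of `S` is zero. -/
def GMSemisimple (r : ∀ I₀ : Type u, GammaSystem.{u, v} I₀ → Prop)
    {I : Type u} (S : GammaSystem I) : Prop :=
  ∀ N : GMIdeal S, r I N.toSystem → N.IsZero

/-- `S` can be g.m.homomorphically mapped onto a non-zero member of the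
class `K`. -/
def MapsOntoNonzeroMember (K : ∀ I₀ : Type u, GammaSystem.{u, v} I₀ → Prop)
    {I : Type u} (S : GammaSystem I) : Prop :=
  ∃ (T : GammaSystem.{u, v} I) (ψ : GMHom S T),
    ψ.Surjective ∧ ¬ T.IsZero ∧ K I T

/-- Condition (Q1): every non-zero g.m.ideal of any member of `K` can be
g.m.homomorphically mapped onto a non-zero member of `K`. -/
def Q1Cond (K : ∀ I₀ : Type u, GammaSystem.{u, v} I₀ → Prop) : Prop :=
  ∀ (I₀ : Type u) (S : GammaSystem I₀), K I₀ S →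
    ∀ N : GMIdeal S, ¬ N.IsZero → MapsOntoNonzeroMember K N.toSystem

/-- Condition (Q2): if every non-zero g.m.ideal of `A` can be
g.m.homomorphically mapped onto a non-zero member of `K`, then `A ∈ K`. -/
def Q2Cond (K : ∀ I₀ : Type u, GammaSystem.{u, v} I₀ → Prop) : Prop :=
  ∀ (I₀ : Type u) (S : GammaSystem I₀),
    (∀ N : GMIdeal S, ¬ N.IsZero → MapsOntoNonzeroMember K N.toSystem) → K I₀ S

/-- The radical class of the upper radical `r^K` determined by `K`: the
g.m.rings which cannot be g.m.homomorphically mapped onto a non-zero member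
of `K`. -/
def UpperRadicalClass (K : ∀ I₀ : Type u, GammaSystem.{u, v} I₀ → Prop)
    (I : Type u) (S : GammaSystem I) : Prop :=
  ¬ MapsOntoNonzeroMember K S

/-- A g.m.weakly special class: (WS1) every member is a semiprime ring;
(WS2) g.m.ideals of members are members; (WS3) if a g.m.ideal `B` of `A`
is in the class, then `A//B*` is in the class. -/
def IsGMWeaklySpecial (K : ∀ I₀ : Type u, GammaSystem.{u, v} I₀ → Prop) : Prop :=
  (∀ (I₀ : Type u) (S : GammaSystem I₀), K I₀ S → IsSemiprimeRing (GMRing S)) ∧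
  (∀ (I₀ : Type u) (S : GammaSystem I₀) (B : GMIdeal S), K I₀ S → K I₀ B.toSystem) ∧
  (∀ (I₀ : Type u) (S : GammaSystem I₀) (B : GMIdeal S),
      K I₀ B.toSystem → K I₀ B.ann.quotSystem)

/-- A g.m.special class: (S1) every member is a prime ring;
(S2) g.m.ideals of members are members; (S3) if a g.m.ideal `B` of `A`
is in the class, then `A//B*` is in the class. -/
def IsGMSpecial (K : ∀ I₀ : Type u, GammaSystem.{u, v} I₀ → Prop) : Prop :=
  (∀ (I₀ : Type u) (S : GammaSystem I₀), K I₀ S → IsPrimeRing (GMRing S)) ∧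
  (∀ (I₀ : Type u) (S : GammaSystem I₀) (B : GMIdeal S), K I₀ S → K I₀ B.toSystem) ∧
  (∀ (I₀ : Type u) (S : GammaSystem I₀) (B : GMIdeal S),
      K I₀ B.toSystem → K I₀ B.ann.quotSystem)

end RadicalTheory

section RingClasses

/-- A weakly special class of (possibly non-unital) rings: members are
semiprime, two-sided ideals of members are members (as rings), and if a
two-sided ideal `B` of `A` is a member then `A/B*` is a member. -/
def IsWeaklySpecialRingClass (K : ∀ (R : Type w) [NonUnitalRing R], Prop) : Prop :=
  (∀ (R : Type w) [NonUnitalRing R], K R → IsSemiprimeRing R) ∧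
  (∀ (R : Type w) [NonUnitalRing R] (B : TwoSidedIdeal R), K R → K B) ∧
  (∀ (R : Type w) [NonUnitalRing R] (B : TwoSidedIdeal R),
      K B → K B.annihilator.ringCon.Quotient)

/-- A special class of rings: a weakly special class all of whose members are
prime rings. -/
def IsSpecialRingClass (K : ∀ (R : Type w) [NonUnitalRing R], Prop) : Prop :=
  (∀ (R : Type w) [NonUnitalRing R], K R → IsPrimeRing R) ∧
  (∀ (R : Type w) [NonUnitalRing R] (B : TwoSidedIdeal R), K R → K B) ∧
  (∀ (R : Type w) [NonUnitalRing R] (B : TwoSidedIdeal R),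
      K B → K B.annihilator.ringCon.Quotient)

/-- The (upper) radical of the ring `R` determined by a class `K` of rings:
the intersection of all two-sided ideals `B` with `R/B ∈ K`. -/
def ringRadical (K : ∀ (R : Type w) [NonUnitalRing R], Prop)
    (R : Type w) [NonUnitalRing R] : Set R :=
  { x | ∀ B : TwoSidedIdeal R, K B.ringCon.Quotient → x ∈ B }

/-- A radical property of rings: closure under surjective homomorphic images,
existence of a largest `r`-ideal, and `r`-semisimplicity of the quotient by it. -/
def IsRingRadicalProperty (K : ∀ (R : Type w) [NonUnitalRing R], Prop) : Prop :=
  (∀ (R S : Type w) [NonUnitalRing R] [NonUnitalRing S] (f : R →ₙ+* S),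
      Function.Surjective f → K R → K S) ∧
  (∀ (R : Type w) [NonUnitalRing R], ∃ B : TwoSidedIdeal R,
      K B ∧ (∀ C : TwoSidedIdeal R, K C → C ≤ B) ∧
      ∀ D : TwoSidedIdeal B.ringCon.Quotient, K D → D = ⊥)

end RingClasses

/-- An ideal of the `A_{ts}`-ring `A_{st}` (a `Γ`-ring with `M = A_{st}`,
`Γ = A_{ts}`): an additive subgroup `B` with `B·A_{ts}·A_{st} ⊆ B` and
`A_{st}·A_{ts}·B ⊆ B`. -/
structure GammaIdeal (S : GammaSystem I) (s t : I) where
  carrier : AddSubgroup (S.A s t)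
  mul_mem_right : ∀ b ∈ carrier, ∀ (u : S.A t s) (y : S.A s t),
    S.mul (S.mul b u) y ∈ carrier
  mul_mem_left : ∀ (x : S.A s t) (u : S.A t s), ∀ b ∈ carrier,
    S.mul (S.mul x u) b ∈ carrier

section GMRadical

variable {I : Type u}

lemma gm_mul_def {S : GammaSystem I} (x y : GMRing S) : x * y = S.gmul x y := rfl

namespace GMIdeal

variable {S : GammaSystem I} (N : GMIdeal S)

lemma zero_mem_carrier : (0 : GMRing S) ∈ N.carrier := fun p => by
  rw [DFinsupp.zero_apply]; exact (N.B p.1 p.2).zero_mem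

lemma add_mem_carrier {x y : GMRing S} (hx : x ∈ N.carrier) (hy : y ∈ N.carrier) :
    x + y ∈ N.carrier := fun p => by
  rw [DFinsupp.add_apply]; exact (N.B p.1 p.2).add_mem (hx p) (hy p)

lemma neg_mem_carrier {x : GMRing S} (hx : x ∈ N.carrier) : -x ∈ N.carrier :=
  fun p => by rw [DFinsupp.neg_apply]; exact (N.B p.1 p.2).neg_mem (hx p)

open Classical in
lemma mul_mem_carrier_left {y : GMRing S} (hy : y ∈ N.carrier) (x : GMRing S) :
    x * y ∈ N.carrier := by
  rw [gm_mul_def]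
  induction x using DFinsupp.induction with
  | h0 => rw [S.zero_gmul]; exact N.zero_mem_carrier
  | ha t b f hf hb ih =>
      rw [S.add_gmul]
      refine N.add_mem_carrier (fun p => ?_) ih
      obtain ⟨t1, t2⟩ := t
      obtain ⟨p1, p2⟩ := p
      by_cases h1 : p1 = t1
      · subst h1
        rw [S.single_gmul_left_apply]
        exact N.mul_mem_left _ _ (hy (t2, p2))
      · rw [S.single_gmul_left_apply_ne _ _ _ _ _ _ h1]
        exact (N.B p1 p2).zero_mem

open Classical in
lemma mul_mem_carrier_right {x : GMRing S} (hx : x ∈ N.carrier) (y : GMRing S) :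
    x * y ∈ N.carrier := by
  rw [gm_mul_def]
  induction y using DFinsupp.induction with
  | h0 => rw [S.gmul_zero]; exact N.zero_mem_carrier
  | ha t b f hf hb ih =>
      rw [S.gmul_add]
      refine N.add_mem_carrier (fun p => ?_) ih
      obtain ⟨t1, t2⟩ := t
      obtain ⟨p1, p2⟩ := p
      by_cases h2 : p2 = t2
      · subst h2
        rw [S.gmul_single_right_apply]
        exact N.mul_mem_right _ _ (hx (p1, t1))
      · rw [S.gmul_single_right_apply_ne _ _ _ _ _ _ h2]
        exact (N.B p1 p2).zero_mem

/-- The carrier of a g.m.ideal as a two-sided ideal of the g.m.ring. -/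
noncomputable def ringIdeal : TwoSidedIdeal (GMRing S) :=
  TwoSidedIdeal.mk' N.carrier N.zero_mem_carrier
    (fun hx hy => N.add_mem_carrier hx hy)
    (fun hx => N.neg_mem_carrier hx)
    (fun {x y} hy => N.mul_mem_carrier_left hy x)
    (fun {x y} hx => N.mul_mem_carrier_right hx y)

lemma mem_ringIdeal {x : GMRing S} : x ∈ N.ringIdeal ↔ x ∈ N.carrier :=
  TwoSidedIdeal.mem_mk' _ _ _ _ _ _ x

/-- The componentwise quotient map `A → A//B`. -/
def quotMap : GMRing S → GMRing N.quotSystem :=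
  DFinsupp.mapRange (fun p a => (QuotientAddGroup.mk a : N.quotSystem.A p.1 p.2))
    (fun _ => rfl)

lemma quotMap_apply (x : GMRing S) (p : I × I) :
    N.quotMap x p = (QuotientAddGroup.mk (x p) : N.quotSystem.A p.1 p.2) :=
  DFinsupp.mapRange_apply _ _ x p

lemma quotMap_zero : N.quotMap 0 = 0 := by
  ext p; rw [N.quotMap_apply, DFinsupp.zero_apply, DFinsupp.zero_apply]; rfl

lemma quotMap_add (x y : GMRing S) :
    N.quotMap (x + y) = N.quotMap x + N.quotMap y := by
  ext p
  rw [N.quotMap_apply, DFinsupp.add_apply, DFinsupp.add_apply, N.quotMap_apply,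
    N.quotMap_apply]
  rfl

lemma quotMap_neg (x : GMRing S) : N.quotMap (-x) = -(N.quotMap x) := by
  ext p
  rw [N.quotMap_apply, DFinsupp.neg_apply, DFinsupp.neg_apply, N.quotMap_apply]
  rfl

open Classical in
lemma quotMap_single (p : I × I) (a : S.A p.1 p.2) :
    N.quotMap (DFinsupp.single p a) =
      DFinsupp.single p (QuotientAddGroup.mk a : N.quotSystem.A p.1 p.2) :=
  DFinsupp.mapRange_single

open Classical in
lemma quotMap_gmul_single (t : I × I) (b : S.A t.1 t.2) (y : GMRing S) :
    N.quotMap (S.gmul (DFinsupp.single t b) y) =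
      N.quotSystem.gmul (N.quotMap (DFinsupp.single t b)) (N.quotMap y) := by
  induction y using DFinsupp.induction with
  | h0 =>
      rw [S.gmul_zero, N.quotMap_zero, N.quotSystem.gmul_zero]
  | ha q c g hg hc ih =>
      rw [S.gmul_add, N.quotMap_add, N.quotMap_add, N.quotSystem.gmul_add, ih]
      congr 1
      obtain ⟨t1, t2⟩ := t
      obtain ⟨q1, q2⟩ := q
      rw [N.quotMap_single, N.quotMap_single, S.gmul_single_single]
      erw [N.quotSystem.gmul_single_single]
      by_cases h : t2 = q1
      · subst h
        rw [dif_pos rfl, dif_pos rfl, N.quotMap_single]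
        rw [show (cast (congrArg (fun t => S.A t q2) (Eq.symm rfl)) c) = c from rfl]
        rw [show (cast (congrArg (fun t => N.quotSystem.A t q2) (Eq.symm rfl))
          ((QuotientAddGroup.mk c : N.quotSystem.A t2 q2)))
            = (QuotientAddGroup.mk c : N.quotSystem.A t2 q2) from rfl]
        rfl
      · rw [dif_neg h, dif_neg h, N.quotMap_zero]

open Classical in
lemma quotMap_mul (x y : GMRing S) :
    N.quotMap (x * y) = N.quotMap x * N.quotMap y := by
  rw [gm_mul_def, gm_mul_def]
  induction x using DFinsupp.induction with
  | h0 =>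
      rw [S.zero_gmul, N.quotMap_zero, N.quotSystem.zero_gmul]
  | ha t b f hf hb ih =>
      rw [S.add_gmul, N.quotMap_add, N.quotMap_add, N.quotSystem.add_gmul, ih,
        N.quotMap_gmul_single]

lemma quotMap_surjective : Function.Surjective N.quotMap := by
  classical
  intro y
  induction y using DFinsupp.induction with
  | h0 => exact ⟨0, N.quotMap_zero⟩
  | ha t γ g hg hγ ih =>
      obtain ⟨y, hy⟩ := ih
      obtain ⟨a, rfl⟩ := QuotientAddGroup.mk_surjective γ
      exact ⟨DFinsupp.single t a + y, by rw [N.quotMap_add, N.quotMap_single, hy]⟩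

lemma quotMap_eq_zero_iff (x : GMRing S) :
    N.quotMap x = 0 ↔ x ∈ N.carrier := by
  constructor
  · intro h p
    have h' : N.quotMap x p = 0 := by rw [h, DFinsupp.zero_apply]
    rw [N.quotMap_apply] at h'
    exact (QuotientAddGroup.eq_zero_iff (x p)).mp h'
  · intro h
    ext p
    rw [N.quotMap_apply, DFinsupp.zero_apply]
    exact (QuotientAddGroup.eq_zero_iff (x p)).mpr (h p)

end GMIdeal

end GMRadical

section GMRadical2

variable {I : Type u}

lemma bot_isPrimeIdeal {R : Type w} [NonUnitalRing R] (h : IsPrimeRing R) :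
    (⊥ : TwoSidedIdeal R).IsPrimeIdeal := by
  intro B C hBC
  rcases h B C (fun b hb c hc => (TwoSidedIdeal.mem_bot R).mp (hBC b hb c hc)) with
    h' | h'
  · exact Or.inl (le_of_eq h')
  · exact Or.inr (le_of_eq h')

namespace GMIdeal

variable {S : GammaSystem I} (N : GMIdeal S)

/-- If the quotient g.m.ring is a prime ring, then the carrier ideal is a
prime two-sided ideal of the g.m.ring. -/
lemma ringIdeal_isPrimeIdeal (h : IsPrimeRing (GMRing N.quotSystem)) :
    N.ringIdeal.IsPrimeIdeal := by
  intro C D hCD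
  -- push forward
  let push : TwoSidedIdeal (GMRing S) → TwoSidedIdeal (GMRing N.quotSystem) :=
    fun C => TwoSidedIdeal.mk' {y | ∃ c ∈ C, N.quotMap c = y}
      ⟨0, C.zero_mem, N.quotMap_zero⟩
      (fun {x y} ⟨c, hc, hcx⟩ ⟨d, hd, hdy⟩ =>
        ⟨c + d, C.add_mem hc hd, by rw [N.quotMap_add, hcx, hdy]⟩)
      (fun {x} ⟨c, hc, hcx⟩ => ⟨-c, C.neg_mem hc, by rw [N.quotMap_neg, hcx]⟩)
      (fun {x y} ⟨c, hc, hcy⟩ => by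
        obtain ⟨x', rfl⟩ := N.quotMap_surjective x
        exact ⟨x' * c, C.mul_mem_left _ _ hc, by rw [N.quotMap_mul, hcy]⟩)
      (fun {x y} ⟨c, hc, hcx⟩ => by
        obtain ⟨y', rfl⟩ := N.quotMap_surjective y
        exact ⟨c * y', C.mul_mem_right _ _ hc, by rw [N.quotMap_mul, hcx]⟩)
  have mem_push : ∀ (C : TwoSidedIdeal (GMRing S)) (y : GMRing N.quotSystem),
      y ∈ push C ↔ ∃ c ∈ C, N.quotMap c = y := fun C y =>
    TwoSidedIdeal.mem_mk' _ _ _ _ _ _ y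
  have key : ∀ b ∈ push C, ∀ d ∈ push D, b * d = 0 := by
    intro b hb d hd
    obtain ⟨c, hc, rfl⟩ := (mem_push C b).mp hb
    obtain ⟨e, he, rfl⟩ := (mem_push D d).mp hd
    rw [← N.quotMap_mul]
    exact (N.quotMap_eq_zero_iff _).mpr ((N.mem_ringIdeal).mp (hCD c hc e he))
  rcases h (push C) (push D) key with h' | h'
  · refine Or.inl (fun c hc => ?_)
    have : N.quotMap c ∈ push C := (mem_push C _).mpr ⟨c, hc, rfl⟩
    rw [h'] at this
    exact N.mem_ringIdeal.mpr
      ((N.quotMap_eq_zero_iff c).mp ((TwoSidedIdeal.mem_bot _).mp this))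
  · refine Or.inr (fun d hd => ?_)
    have : N.quotMap d ∈ push D := (mem_push D _).mpr ⟨d, hd, rfl⟩
    rw [h'] at this
    exact N.mem_ringIdeal.mpr
      ((N.quotMap_eq_zero_iff d).mp ((TwoSidedIdeal.mem_bot _).mp this))

lemma ext' {M N : GMIdeal S} (h : M.B = N.B) : M = N := by
  cases M; cases N
  cases h
  rfl

instance : PartialOrder (GMIdeal S) where
  le M N := ∀ i j, M.B i j ≤ N.B i j
  le_refl _ _ _ := le_refl _
  le_trans a b c hab hbc i j := le_trans (hab i j) (hbc i j)
  le_antisymm a b hab hba :=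
    ext' (funext fun i => funext fun j => le_antisymm (hab i j) (hba i j))

lemma le_def {M N : GMIdeal S} : M ≤ N ↔ ∀ i j, M.B i j ≤ N.B i j := Iff.rfl

end GMIdeal

/-- The zero g.m.ideal. -/
def botGM (S : GammaSystem I) : GMIdeal S where
  B _ _ := ⊥
  mul_mem_right x z hx := by
    rw [AddSubgroup.mem_bot] at hx ⊢
    rw [hx, S.zero_mul']
  mul_mem_left x z hz := by
    rw [AddSubgroup.mem_bot] at hz ⊢
    rw [hz, S.mul_zero']

/-- The union of a nonempty chain of g.m.ideals. -/
def chainGM {S : GammaSystem I} (c : Set (GMIdeal S)) (hc : IsChain (· ≤ ·) c)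
    (hne : c.Nonempty) : GMIdeal S where
  B i j :=
    { carrier := ⋃ J ∈ c, (J.B i j : Set (S.A i j))
      zero_mem' := by
        obtain ⟨J, hJ⟩ := hne
        exact Set.mem_biUnion hJ (J.B i j).zero_mem
      add_mem' := by
        intro x y hx hy
        simp only [Set.mem_iUnion] at hx hy ⊢
        obtain ⟨J, hJ, hxJ⟩ := hx
        obtain ⟨K, hK, hyK⟩ := hy
        rcases hc.total hJ hK with h | h
        · exact ⟨K, hK, (K.B i j).add_mem (h i j hxJ) hyK⟩
        · exact ⟨J, hJ, (J.B i j).add_mem hxJ (h i j hyK)⟩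
      neg_mem' := by
        intro x hx
        simp only [Set.mem_iUnion] at hx ⊢
        obtain ⟨J, hJ, hxJ⟩ := hx
        exact ⟨J, hJ, (J.B i j).neg_mem hxJ⟩ }
  mul_mem_right := by
    intro i j k x z hx
    obtain ⟨J, hJ, hxJ⟩ := Set.mem_iUnion₂.mp hx
    exact Set.mem_iUnion₂.mpr ⟨J, hJ, J.mul_mem_right x z hxJ⟩
  mul_mem_left := by
    intro i j k x z hz
    obtain ⟨J, hJ, hzJ⟩ := Set.mem_iUnion₂.mp hz
    exact Set.mem_iUnion₂.mpr ⟨J, hJ, J.mul_mem_left x z hzJ⟩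

lemma mem_chainGM {S : GammaSystem I} {c : Set (GMIdeal S)}
    {hc : IsChain (· ≤ ·) c} {hne : c.Nonempty} {i j : I} {x : S.A i j} :
    x ∈ (chainGM c hc hne).B i j ↔ ∃ J ∈ c, x ∈ J.B i j := by
  show x ∈ (⋃ J ∈ c, (J.B i j : Set (S.A i j))) ↔ _
  simp

open Classical in
/-- The componentwise projection of a two-sided ideal of the g.m.ring,
as a g.m.ideal. -/
def projGM (T : GammaSystem I) (C : TwoSidedIdeal (GMRing T)) : GMIdeal T where
  B i j :=
    { carrier := {γ | ∃ c ∈ C, c (i, j) = γ}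
      zero_mem' := ⟨0, C.zero_mem, DFinsupp.zero_apply _⟩
      add_mem' := by
        rintro x y ⟨c, hc, rfl⟩ ⟨d, hd, rfl⟩
        exact ⟨c + d, C.add_mem hc hd, DFinsupp.add_apply c d _⟩
      neg_mem' := by
        rintro x ⟨c, hc, rfl⟩
        exact ⟨-c, C.neg_mem hc, DFinsupp.neg_apply c _⟩ }
  mul_mem_right := by
    rintro i j k x z ⟨c, hc, rfl⟩
    refine ⟨c * DFinsupp.single (j, k) z, C.mul_mem_right _ _ hc, ?_⟩
    rw [gm_mul_def]
    exact T.gmul_single_right_apply c j k z i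
  mul_mem_left := by
    rintro i j k x z ⟨c, hc, rfl⟩
    refine ⟨DFinsupp.single (i, j) x * c, C.mul_mem_left _ _ hc, ?_⟩
    rw [gm_mul_def]
    exact T.single_gmul_left_apply i j x c k

lemma mem_projGM {T : GammaSystem I} {C : TwoSidedIdeal (GMRing T)} {i j : I}
    {γ : T.A i j} : γ ∈ (projGM T C).B i j ↔ ∃ c ∈ C, c (i, j) = γ := Iff.rfl

/-- The pullback of a g.m.ideal of the quotient g.m.ring. -/
def pullbackGM {S : GammaSystem I} (N : GMIdeal S) (G : GMIdeal N.quotSystem) :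
    GMIdeal S where
  B i j := (G.B i j).comap (QuotientAddGroup.mk' (N.B i j))
  mul_mem_right := by
    intro i j k x z hx
    change (QuotientAddGroup.mk x : N.quotSystem.A i j) ∈ G.B i j at hx
    change (QuotientAddGroup.mk (S.mul x z) : N.quotSystem.A i k) ∈ G.B i k
    have h : (QuotientAddGroup.mk (S.mul x z) : N.quotSystem.A i k) =
        N.quotSystem.mul (QuotientAddGroup.mk x) (QuotientAddGroup.mk z) := rfl
    rw [h]
    exact G.mul_mem_right _ _ hx
  mul_mem_left := by
    intro i j k x z hz
    change (QuotientAddGroup.mk z : N.quotSystem.A j k) ∈ G.B j k at hz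
    change (QuotientAddGroup.mk (S.mul x z) : N.quotSystem.A i k) ∈ G.B i k
    have h : (QuotientAddGroup.mk (S.mul x z) : N.quotSystem.A i k) =
        N.quotSystem.mul (QuotientAddGroup.mk x) (QuotientAddGroup.mk z) := rfl
    rw [h]
    exact G.mul_mem_left _ _ hz

lemma mem_pullbackGM {S : GammaSystem I} {N : GMIdeal S}
    {G : GMIdeal N.quotSystem} {i j : I} {x : S.A i j} :
    x ∈ (pullbackGM N G).B i j ↔
      (QuotientAddGroup.mk x : N.quotSystem.A i j) ∈ G.B i j := Iff.rfl

end GMRadical2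

section GMRadical3

variable {I : Type u} {S : GammaSystem I}

open Classical in
/-- Ring m-nilpotence of `e_{ij}(α)` from system m-nilpotence of `α`. -/
lemma MNilpotent.isMNilpotent_single {i j : I} {α : S.A i j}
    (h : S.MNilpotent i j α) :
    IsMNilpotent (DFinsupp.single (i, j) α : GMRing S) := by
  intro a ha0 hstep
  choose u hu using hstep
  have key : ∀ n, a n = DFinsupp.single (i, j) ((a n) (i, j)) := by
    intro n
    induction n with
    | zero => rw [ha0, DFinsupp.single_eq_same]
    | succ n ih =>
        rw [hu n, ih]
        simp only [gm_mul_def]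
        rw [S.single_gmul_gmul_single, DFinsupp.single_eq_same]
  have hβ : ∀ n, (a (n+1)) (i, j) =
      S.mul (S.mul ((a n) (i, j)) ((u n) (j, i))) ((a n) (i, j)) := by
    intro n
    rw [hu n]
    conv_lhs => rw [key n]
    simp only [gm_mul_def]
    rw [S.single_gmul_gmul_single, DFinsupp.single_eq_same]
  obtain ⟨k, hk⟩ := h (fun n => (a n) (i, j))
    (show (a 0) (i, j) = α by rw [ha0, DFinsupp.single_eq_same])
    (fun n => ⟨(u n) (j, i), hβ n⟩)
  refine ⟨k, ?_⟩
  rw [key k, hk, DFinsupp.single_zero]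

open Classical in
/-- System m-nilpotence of `α` from ring m-nilpotence of `e_{ij}(α)`. -/
lemma isMNilpotent_single_mnilpotent {i j : I} {α : S.A i j}
    (h : IsMNilpotent (DFinsupp.single (i, j) α : GMRing S)) :
    S.MNilpotent i j α := by
  intro β hβ0 hstep
  choose v hv using hstep
  obtain ⟨k, hk⟩ := h (fun n => DFinsupp.single (i, j) (β n))
    (show (DFinsupp.single (i, j) (β 0) : GMRing S) = _ by rw [hβ0])
    (fun n => ⟨DFinsupp.single (j, i) (v n), by
      show (DFinsupp.single (i, j) (β (n+1)) : GMRing S) =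
        DFinsupp.single (i, j) (β n) * DFinsupp.single (j, i) (v n) *
          DFinsupp.single (i, j) (β n)
      rw [hv n]
      simp only [gm_mul_def]
      rw [S.single_gmul_gmul_single, DFinsupp.single_eq_same]⟩)
  refine ⟨k, ?_⟩
  rwa [DFinsupp.single_eq_zero] at hk

open Classical in
/-- Components of ring-m-nilpotent generalized matrices are system-m-nilpotent. -/
lemma isMNilpotent_component {x : GMRing S} (hx : IsMNilpotent x) (i j : I) :
    S.MNilpotent i j (x (i, j)) := by
  intro β hβ0 hstep
  choose v hv using hstep
  -- build a ring m-sequence over x whose (i,j)-components are β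
  let a : ℕ → GMRing S := fun n =>
    Nat.rec x (fun n an => an * DFinsupp.single (j, i) (v n) * an) n
  have ha : ∀ n, a (n + 1) = a n * DFinsupp.single (j, i) (v n) * a n :=
    fun n => rfl
  have hcomp : ∀ n, (a n) (i, j) = β n := by
    intro n
    induction n with
    | zero => exact hβ0.symm ▸ rfl
    | succ n ih =>
        rw [ha n, gm_mul_def, gm_mul_def, S.gmul_single_gmul_apply, ih, ← hv n]
  obtain ⟨k, hk⟩ := hx a rfl (fun n => ⟨DFinsupp.single (j, i) (v n), ha n⟩)
  refine ⟨k, ?_⟩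
  rw [← hcomp k, hk, DFinsupp.zero_apply]

open Classical in
/-- The candidate largest Baer g.m.ideal: componentwise, the elements whose
associated single generalized matrix lies in the Baer radical of the ring. -/
def baerGM (S : GammaSystem I) : GMIdeal S where
  B i j :=
    { carrier := {α | (DFinsupp.single (i, j) α : GMRing S) ∈ baerRadical (GMRing S)}
      zero_mem' := fun P hP => by
        rw [DFinsupp.single_zero]; exact P.zero_mem
      add_mem' := by
        intro α β hα hβ
        intro P hP
        rw [DFinsupp.single_add]
        exact P.add_mem (hα P hP) (hβ P hP)
      neg_mem' := by
        intro α hα P hP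
        rw [DFinsupp.single_neg]
        exact P.neg_mem (hα P hP) }
  mul_mem_right := by
    intro i j k x z hx P hP
    have h : (DFinsupp.single (i, k) (S.mul x z) : GMRing S) =
        DFinsupp.single (i, j) x * DFinsupp.single (j, k) z := by
      rw [gm_mul_def, S.gmul_single_single, dif_pos rfl]
      rfl
    rw [h]
    exact P.mul_mem_right _ _ (hx P hP)
  mul_mem_left := by
    intro i j k x z hz P hP
    have h : (DFinsupp.single (i, k) (S.mul x z) : GMRing S) =
        DFinsupp.single (i, j) x * DFinsupp.single (j, k) z := by
      rw [gm_mul_def, S.gmul_single_single, dif_pos rfl]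
      rfl
    rw [h]
    exact P.mul_mem_left _ _ (hz P hP)

open Classical in
lemma mem_baerGM {i j : I} {α : S.A i j} :
    α ∈ (baerGM S).B i j ↔
      (DFinsupp.single (i, j) α : GMRing S) ∈ baerRadical (GMRing S) := Iff.rfl

end GMRadical3

section GMRadical4

variable {I : Type u} {S : GammaSystem I}

open Classical in
/-- Every system-element that is not m-nilpotent avoids some prime g.m.ideal. -/
lemma exists_prime_gmideal {i j : I} {α : S.A i j} (h : ¬ S.MNilpotent i j α) :
    ∃ B : GMIdeal S, IsPrimeRing (GMRing B.quotSystem) ∧ α ∉ B.B i j := by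
  rw [GammaSystem.MNilpotent] at h
  push_neg at h
  obtain ⟨β, hβ0, hstep, hnz⟩ := h
  choose v hv using hstep
  set 𝒮 : Set (GMIdeal S) := {G | ∀ n, β n ∉ G.B i j} with h𝒮
  have hbot : botGM S ∈ 𝒮 := fun n hn => hnz n (AddSubgroup.mem_bot.mp hn)
  obtain ⟨Bm, hBm⟩ := zorn_le₀ 𝒮 (by
    intro c hc hchain
    rcases Set.eq_empty_or_nonempty c with rfl | hne
    · exact ⟨botGM S, hbot, by simp⟩
    · refine ⟨chainGM c hchain hne, ?_, ?_⟩
      · intro n hn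
        obtain ⟨J, hJ, hnJ⟩ := mem_chainGM.mp hn
        exact hc hJ n hnJ
      · intro J hJ i' j' y hy
        exact mem_chainGM.mpr ⟨J, hJ, hy⟩)
  have descend : ∀ (G : GMIdeal S) (n m : ℕ), n ≤ m →
      β n ∈ G.B i j → β m ∈ G.B i j := by
    intro G n m hnm hmem
    induction m with
    | zero => exact (Nat.le_zero.mp hnm) ▸ hmem
    | succ m ih =>
        rcases Nat.lt_or_ge n (m+1) with h' | h'
        · have := ih (Nat.lt_succ_iff.mp h')
          rw [hv m]
          exact G.mul_mem_right _ _ (G.mul_mem_right _ _ this)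
        · exact (Nat.le_antisymm hnm h') ▸ hmem
  refine ⟨Bm, ?_, fun hmem => hBm.1 0 (hβ0 ▸ hmem)⟩
  intro C D hCD
  by_contra hcon
  push_neg at hcon
  obtain ⟨hC, hD⟩ := hcon
  -- from a nonzero ideal, a strictly bigger pullback
  have pull : ∀ E : TwoSidedIdeal (GMRing Bm.quotSystem), E ≠ ⊥ →
      ∃ n, β n ∈ (pullbackGM Bm (projGM Bm.quotSystem E)).B i j := by
    intro E hE
    set G := pullbackGM Bm (projGM Bm.quotSystem E) with hG
    have hle : Bm ≤ G := by
      intro i' j' x hx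
      rw [mem_pullbackGM, (QuotientAddGroup.eq_zero_iff x).mpr hx]
      exact ((projGM Bm.quotSystem E).B i' j').zero_mem
    have hnotle : ¬ G ≤ Bm := by
      have : ∃ e ∈ E, e ≠ 0 := by
        by_contra h'
        push_neg at h'
        exact hE (le_bot_iff.mp (fun x hx => (TwoSidedIdeal.mem_bot _).mpr (h' x hx)))
      obtain ⟨e, heE, hene⟩ := this
      have : ∃ p : I × I, e p ≠ 0 := by
        by_contra h'
        push_neg at h'
        exact hene (DFinsupp.ext h')
      obtain ⟨p, hp⟩ := this
      obtain ⟨a, ha⟩ := QuotientAddGroup.mk_surjective (e p)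
      intro hle'
      have haG : a ∈ G.B p.1 p.2 := by
        rw [hG, mem_pullbackGM]
        exact ⟨e, heE, by rw [← ha]⟩
      have : (QuotientAddGroup.mk a : Bm.quotSystem.A p.1 p.2) = 0 :=
        (QuotientAddGroup.eq_zero_iff a).mpr (hle' p.1 p.2 haG)
      rw [ha] at this
      exact hp this
    have : G ∉ 𝒮 := fun hmem => hnotle (hBm.2 hmem hle)
    rw [h𝒮, Set.mem_setOf_eq] at this
    push_neg at this
    obtain ⟨n, hn⟩ := this
    exact ⟨n, hn⟩
  obtain ⟨n₁, hn₁⟩ := pull C hC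
  obtain ⟨n₂, hn₂⟩ := pull D hD
  set N := max n₁ n₂ with hN
  have hβC := descend _ n₁ N (le_max_left _ _) hn₁
  have hβD := descend _ n₂ N (le_max_right _ _) hn₂
  rw [mem_pullbackGM] at hβC hβD
  obtain ⟨c, hc, hcβ⟩ := hβC
  obtain ⟨d, hd, hdβ⟩ := hβD
  -- the key computation
  have hCde : c * DFinsupp.single (j, i)
      (QuotientAddGroup.mk (v N) : Bm.quotSystem.A j i) * d = 0 :=
    hCD _ (C.mul_mem_right _ _ hc) d hd
  have hcomp : Bm.quotSystem.mul (Bm.quotSystem.mul (c (i, j))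
        (QuotientAddGroup.mk (v N) : Bm.quotSystem.A j i)) (d (i, j)) = 0 := by
    have := congrFun (congrArg DFunLike.coe hCde) (i, j)
    rw [gm_mul_def, gm_mul_def] at this
    erw [Bm.quotSystem.gmul_single_gmul_apply] at this
    rw [this]
    rfl
  rw [hcβ, hdβ] at hcomp
  have : (QuotientAddGroup.mk (β (N + 1)) : Bm.quotSystem.A i j) = 0 := by
    rw [hv N]
    exact hcomp
  exact hBm.1 (N + 1) ((QuotientAddGroup.eq_zero_iff _).mp this)

/-- m-nilpotence within the carrier of a g.m.ideal upgrades to m-nilpotence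
in the whole g.m.ring. -/
lemma isMNilpotent_of_isMNilpotentIn (M : GMIdeal S) {x : GMRing S}
    (hx : x ∈ M.carrier) (h : IsMNilpotentIn M.carrier x) : IsMNilpotent x := by
  intro a ha0 hstep
  choose u hu using hstep
  have hmem : ∀ n, a n ∈ M.carrier := by
    intro n
    induction n with
    | zero => exact ha0 ▸ hx
    | succ n ih =>
        rw [hu n]
        exact M.mul_mem_carrier_left ih _
  obtain ⟨k, hk⟩ := h (fun n => a (2 * n)) (fun n => hmem _)
    (by simpa using ha0)
    (fun n => by
      refine ⟨u (2*n) * (a (2*n) * (u (2*n+1) * (a (2*n) * u (2*n)))),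
        M.mul_mem_carrier_left
          (M.mul_mem_carrier_right (hmem (2*n))
            (u (2*n+1) * (a (2*n) * u (2*n)))) (u (2*n)), ?_⟩
      show a (2*(n+1)) = _
      have e1 : 2 * (n + 1) = (2 * n + 1) + 1 := by ring
      rw [e1, hu (2*n+1), hu (2*n)]
      simp only [mul_assoc])
  exact ⟨2 * k, hk⟩

open Classical in
/-- If each "single" component of `x` lies in a two-sided ideal, so does `x`. -/
lemma mem_of_single_comp (P : TwoSidedIdeal (GMRing S)) (x : GMRing S)
    (hx : ∀ p : I × I, (DFinsupp.single p (x p) : GMRing S) ∈ P) : x ∈ P := by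
  induction x using DFinsupp.induction with
  | h0 => exact P.zero_mem
  | ha t b f hf hb ih =>
      refine P.add_mem ?_ (ih (fun p => ?_))
      · have h1 := hx t
        have h2 : ((DFinsupp.single t b + f : GMRing S)) t = b := by
          rw [DFinsupp.add_apply, DFinsupp.single_eq_same, hf, add_zero]
        rwa [h2] at h1
      · by_cases hp : p = t
        · subst hp
          rw [hf, DFinsupp.single_zero]
          exact P.zero_mem
        · have h1 := hx p
          have h2 : ((DFinsupp.single t b + f : GMRing S)) p = f p := by
            rw [DFinsupp.add_apply,
              DFinsupp.single_eq_of_ne (fun hh => hp hh), zero_add]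
          rwa [h2] at h1

end GMRadical4

/-- **Theorem 3.4.** `\bar r_b(A) = g.m.r_b(A) = r_b(A)`: the componentwise
intersection of all prime g.m.ideals of `A` equals the largest g.m.ideal `N`
of `A` all of whose elements are `m`-nilpotent in the ring `N`, and both
equal the Baer radical of the ring `A`. -/
theorem barBaer_eq_gmBaer_eq_baerRadical {I : Type u} (S : GammaSystem.{u, v} I) :
    ∃ N : GMIdeal S, N.IsBaerGMIdeal ∧
      (∀ M : GMIdeal S, M.IsBaerGMIdeal → ∀ i j : I, M.B i j ≤ N.B i j) ∧
      N.carrier = gmBarBaer S ∧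
      N.carrier = baerRadical (GMRing S) := by
  classical
  have hbr : (baerGM S).carrier = baerRadical (GMRing S) := by
    ext x
    constructor
    · intro hx P hP
      exact mem_of_single_comp P x (fun p => hx p P hP)
    · intro hx p
      obtain ⟨p1, p2⟩ := p
      have hmn : S.MNilpotent p1 p2 (x (p1, p2)) :=
        isMNilpotent_component (isMNilpotent_of_mem_primes hx) p1 p2
      exact fun P hP => (MNilpotent.isMNilpotent_single hmn).mem_prime P hP
  have hgm : (baerGM S).carrier = gmBarBaer S := by
    ext x
    constructor
    · intro hx B hB p
      have hK : B.ringIdeal.IsPrimeIdeal := B.ringIdeal_isPrimeIdeal hB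
      have h1 : (DFinsupp.single p (x p) : GMRing S) ∈ B.ringIdeal :=
        hx p B.ringIdeal hK
      have h2 := (B.mem_ringIdeal.mp h1) p
      rwa [DFinsupp.single_eq_same] at h2
    · intro hx p
      obtain ⟨p1, p2⟩ := p
      have hmn : S.MNilpotent p1 p2 (x (p1, p2)) := by
        by_contra h'
        obtain ⟨Bq, hprime, hnot⟩ := exists_prime_gmideal h'
        exact hnot (hx Bq hprime (p1, p2))
      exact fun P hP => (MNilpotent.isMNilpotent_single hmn).mem_prime P hP
  refine ⟨baerGM S, ?_, ?_, hgm, hbr⟩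
  · intro x hx a hmem ha0 hstep
    have hx' : x ∈ baerRadical (GMRing S) := hbr ▸ hx
    exact isMNilpotent_of_mem_primes hx' a ha0
      (fun n => (hstep n).imp (fun u hu => hu.2))
  · intro M hM i j α hα
    have hsing : (DFinsupp.single (i, j) α : GMRing S) ∈ M.carrier := by
      intro p
      by_cases h : p = (i, j)
      · subst h
        rw [DFinsupp.single_eq_same]
        exact hα
      · rw [DFinsupp.single_eq_of_ne (fun hh => h hh)]
        exact (M.B p.1 p.2).zero_mem
    have h2 : IsMNilpotent (DFinsupp.single (i, j) α : GMRing S) :=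
      isMNilpotent_of_isMNilpotentIn M hsing (hM _ hsing)
    exact fun P hP => h2.mem_prime P hP
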